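/- arXiv:1703.07672 — 2 statements merged into one kernel-verified Lean document; each statement's English description precedes it below -/
import Mathlib

section
/- Let z ∈ ℂ, not in the quotient field ℚ(ω) of the Eisenstein integers 𝔈, and let {a_n}, {z_n} be its infinite continued fraction expansion and iteration sequence over 𝔈 with respect to a nearest integer algorithm. Then z is badly approximable with respect to 𝔈 (i.e., there exists δ > 0 such that |z − p/q| ≥ δ/|q|² for all p, q ∈ 𝔈 with q ≠ 0) if and only if the sequence {|a_n|} is bounded. -/
open Complex

noncomputable def eisOmega : ℂ := (-1 + Real.sqrt 3 * Complex.I) / 2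
def IsEis (a : ℂ) : Prop := ∃ x y : ℤ, a = (x : ℂ) + (y : ℂ) * eisOmega

lemma sqrt3C_sq : ((Real.sqrt 3 : ℝ) : ℂ)^2 = 3 := by
  rw [← Complex.ofReal_pow, Real.sq_sqrt (by norm_num : (0:ℝ) ≤ 3)]; norm_num

lemma eisOmega_sq : eisOmega ^ 2 = -1 - eisOmega := by
  unfold eisOmega
  have h := sqrt3C_sq
  have hI : (Complex.I)^2 = -1 := Complex.I_sq
  linear_combination (Complex.I^2/4) * h + (3/4) * hI

lemma eisOmega_re : eisOmega.re = -1/2 := by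
  simp [eisOmega, Complex.div_re]
lemma eisOmega_im : eisOmega.im = Real.sqrt 3 / 2 := by
  simp [eisOmega, Complex.div_im]

lemma isEis_mul {u v : ℂ} (hu : IsEis u) (hv : IsEis v) : IsEis (u * v) := by
  obtain ⟨x, y, rfl⟩ := hu
  obtain ⟨x', y', rfl⟩ := hv
  exact ⟨x*x' - y*y', x*y' + y*x' - y*y', by push_cast; linear_combination (y:ℂ)*(y':ℂ) * eisOmega_sq⟩

lemma isEis_sub {u v : ℂ} (hu : IsEis u) (hv : IsEis v) : IsEis (u - v) := by
  obtain ⟨x, y, rfl⟩ := hu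
  obtain ⟨x', y', rfl⟩ := hv
  exact ⟨x - x', y - y', by push_cast; ring⟩

lemma isEis_add {u v : ℂ} (hu : IsEis u) (hv : IsEis v) : IsEis (u + v) := by
  obtain ⟨x, y, rfl⟩ := hu
  obtain ⟨x', y', rfl⟩ := hv
  exact ⟨x + x', y + y', by push_cast; ring⟩

lemma isEis_normSq {u : ℂ} (hu : IsEis u) : ∃ m : ℤ, Complex.normSq u = m ∧ (u ≠ 0 → 1 ≤ m) := by
  obtain ⟨x, y, rfl⟩ := hu
  refine ⟨x^2 - x*y + y^2, ?_, ?_⟩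
  · have h3 : Real.sqrt 3 ^ 2 = 3 := Real.sq_sqrt (by norm_num)
    rw [Complex.normSq_apply]
    simp only [Complex.add_re, Complex.add_im, Complex.intCast_re, Complex.intCast_im,
      Complex.mul_re, Complex.mul_im, eisOmega_re, eisOmega_im]
    push_cast
    nlinarith [h3]
  · intro hne
    have hxy : ¬ (x = 0 ∧ y = 0) := by
      rintro ⟨rfl, rfl⟩; simp at hne
    have hsq : ∀ t : ℤ, t ≠ 0 → 1 ≤ t^2 := by
      intro t ht
      have h1 := Int.one_le_abs ht
      nlinarith [_root_.sq_abs t]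
    have h1 : 0 < (2*x - y)^2 + 3*y^2 := by
      rcases (not_and_or.mp hxy) with hx | hy
      · rcases eq_or_ne y 0 with rfl | hy
        · nlinarith [hsq x hx]
        · nlinarith [sq_nonneg (2*x - y), hsq y hy]
      · nlinarith [sq_nonneg (2*x - y), hsq y hy]
    push_cast at h1 ⊢
    nlinarith [h1]

lemma isEis_one_le_abs {u : ℂ} (hu : IsEis u) (hne : u ≠ 0) : 1 ≤ ‖u‖ := by
  obtain ⟨m, hm, hm1⟩ := isEis_normSq hu
  have h1 : (1:ℝ) ≤ Complex.normSq u := by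
    rw [hm]; exact_mod_cast hm1 hne
  rw [← Complex.sq_norm] at h1
  nlinarith [norm_nonneg u]

lemma eis_cover (w : ℂ) : ∃ b : ℂ, IsEis b ∧ ‖w - b‖ ≤ 67/100 := by
  have h3 : Real.sqrt 3 ^ 2 = 3 := Real.sq_sqrt (by norm_num)
  have h3pos : 0 < Real.sqrt 3 := Real.sqrt_pos.mpr (by norm_num)
  set yr : ℝ := 2 * w.im / Real.sqrt 3 with hyr
  set y0 : ℤ := round yr with hy0
  set dy : ℝ := yr - y0 with hdy_def
  set xr : ℝ := w.re + w.im / Real.sqrt 3 with hxr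
  set x0 : ℤ := round (xr - dy/2) with hx0
  refine ⟨(x0:ℂ) + (y0:ℂ) * eisOmega, ⟨x0, y0, rfl⟩, ?_⟩
  have hdy : |dy| ≤ 1/2 := abs_sub_round yr
  have hdx : |xr - dy/2 - x0| ≤ 1/2 := abs_sub_round _
  set b : ℂ := (x0:ℂ) + (y0:ℂ) * eisOmega with hb
  have him : w.im = Real.sqrt 3 / 2 * yr := by
    rw [hyr]; field_simp
  have hre2 : (w - b).re = (xr - dy/2 - x0) := by
    simp only [hb, Complex.sub_re, Complex.add_re, Complex.mul_re, Complex.intCast_re,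
      Complex.intCast_im, eisOmega_re, eisOmega_im, hdy_def, hxr, hyr]
    field_simp
    ring
  have him2 : (w - b).im = Real.sqrt 3 / 2 * dy := by
    simp only [hb, Complex.sub_im, Complex.add_im, Complex.mul_im, Complex.intCast_re,
      Complex.intCast_im, eisOmega_re, eisOmega_im, hdy_def]
    rw [him]; ring
  have hns : Complex.normSq (w - b) ≤ 7/16 := by
    rw [Complex.normSq_apply, hre2, him2]
    obtain ⟨ha1, ha2⟩ := abs_le.mp hdy
    obtain ⟨hb1, hb2⟩ := abs_le.mp hdx
    have h1 : (xr - dy/2 - (x0:ℝ))^2 ≤ (1/2)^2 := by nlinarith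
    have h2 : dy^2 ≤ (1/2)^2 := by nlinarith
    nlinarith [h3]
  have habs2 : (‖w - b‖)^2 ≤ 7/16 := by rw [Complex.sq_norm]; exact hns
  nlinarith [norm_nonneg (w - b)]

noncomputable def eisQ (a : ℕ → ℂ) : ℕ → ℂ
  | 0 => 0
  | 1 => 1
  | (n+2) => a (n+1) * eisQ a (n+1) + eisQ a n

noncomputable def eisP (a : ℕ → ℂ) : ℕ → ℂ
  | 0 => 1
  | 1 => a 0
  | (n+2) => a (n+1) * eisP a (n+1) + eisP a n

noncomputable def eisE (a : ℕ → ℂ) (z : ℂ) (n : ℕ) : ℂ := eisQ a n * z - eisP a n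

lemma eisE_zero (a : ℕ → ℂ) (z : ℂ) : eisE a z 0 = -1 := by simp [eisE, eisQ, eisP]
lemma eisE_one (a : ℕ → ℂ) (z : ℂ) : eisE a z 1 = z - a 0 := by simp [eisE, eisQ, eisP]
lemma eisE_rec (a : ℕ → ℂ) (z : ℂ) (n : ℕ) :
    eisE a z (n+2) = a (n+1) * eisE a z (n+1) + eisE a z n := by
  simp only [eisE, eisQ, eisP]; ring

lemma isEis_eisQ (a : ℕ → ℂ) (ha : ∀ n, IsEis (a n)) : ∀ n, IsEis (eisQ a n)
  | 0 => ⟨0, 0, by simp [eisQ]⟩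
  | 1 => ⟨1, 0, by simp [eisQ]⟩
  | (n+2) => by
      rw [show eisQ a (n+2) = a (n+1) * eisQ a (n+1) + eisQ a n from rfl]
      exact isEis_add (isEis_mul (ha _) (isEis_eisQ a ha (n+1))) (isEis_eisQ a ha n)

lemma isEis_eisP (a : ℕ → ℂ) (ha : ∀ n, IsEis (a n)) : ∀ n, IsEis (eisP a n)
  | 0 => ⟨1, 0, by simp [eisP]⟩
  | 1 => by simpa [eisP] using ha 0
  | (n+2) => by
      rw [show eisP a (n+2) = a (n+1) * eisP a (n+1) + eisP a n from rfl]
      exact isEis_add (isEis_mul (ha _) (isEis_eisP a ha (n+1))) (isEis_eisP a ha n)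

lemma eis_det (a : ℕ → ℂ) : ∀ n, eisQ a (n+1) * eisP a n - eisQ a n * eisP a (n+1) = (-1)^n
  | 0 => by simp [eisQ, eisP]
  | (n+1) => by
      have ih := eis_det a n
      rw [pow_succ]
      simp only [eisQ, eisP]
      linear_combination (-1 : ℂ) * ih

lemma eis_detE (a : ℕ → ℂ) (z : ℂ) (n : ℕ) :
    eisQ a n * eisE a z (n+1) - eisQ a (n+1) * eisE a z n = (-1)^n := by
  have h := eis_det a n
  simp only [eisE]
  linear_combination h

lemma eisE_step (z : ℂ) (a zs : ℕ → ℂ) (hz0 : zs 0 = z) (hne : ∀ n, zs n ≠ a n)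
    (hit : ∀ n, zs (n + 1) = (zs n - a n)⁻¹) :
    ∀ n, eisE a z n = - zs (n+1) * eisE a z (n+1)
  | 0 => by
      have h0 : z - a 0 ≠ 0 := by
        rw [← hz0]; exact sub_ne_zero.mpr (hne 0)
      rw [eisE_zero, eisE_one, hit 0, hz0]
      field_simp
  | (n+1) => by
      have ih := eisE_step z a zs hz0 hne hit n
      have hd : zs (n+1) - a (n+1) ≠ 0 := sub_ne_zero.mpr (hne (n+1))
      rw [eisE_rec, ih, hit (n+1)]
      field_simp
      ring

lemma eisE_ne (z : ℂ) (a zs : ℕ → ℂ) (hz0 : zs 0 = z) (hne : ∀ n, zs n ≠ a n)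
    (hit : ∀ n, zs (n + 1) = (zs n - a n)⁻¹) :
    ∀ n, eisE a z n ≠ 0
  | 0 => by rw [eisE_zero]; norm_num
  | (n+1) => by
      have ih := eisE_ne z a zs hz0 hne hit n
      have h := eisE_step z a zs hz0 hne hit n
      intro h0
      rw [h, h0, mul_zero] at ih
      exact ih rfl

set_option maxHeartbeats 1000000 in
/-- z (not in the quotient field ℚ(ω)) is badly approximable with respect to the
Eisenstein integers iff the sequence of absolute values of its partial quotients
is bounded. -/
theorem eisenstein_cf_badly_approximable_iff
    (z : ℂ) (a zs : ℕ → ℂ)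
    (ha : ∀ n, IsEis (a n))
    (hz0 : zs 0 = z)
    (hnear : ∀ n, ∀ b : ℂ, IsEis b → ‖zs n - a n‖ ≤ ‖zs n - b‖)
    (hne : ∀ n, zs n ≠ a n)
    (hit : ∀ n, zs (n + 1) = (zs n - a n)⁻¹)
    (hirr : ¬ ∃ x y : ℚ, z = (x : ℂ) + (y : ℂ) * eisOmega)
    :
    (∃ δ : ℝ, 0 < δ ∧ ∀ pp qq : ℂ, IsEis pp → IsEis qq → qq ≠ 0 →
        δ / ‖qq‖ ^ 2 ≤ ‖z - pp / qq‖)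
      ↔ (∃ C : ℝ, ∀ n : ℕ, ‖a n‖ ≤ C) := by
  have hQE : ∀ n, IsEis (eisQ a n) := isEis_eisQ a ha
  have hPE : ∀ n, IsEis (eisP a n) := isEis_eisP a ha
  have hstep := eisE_step z a zs hz0 hne hit
  have hEne := eisE_ne z a zs hz0 hne hit
  have hEpos : ∀ n, 0 < ‖eisE a z n‖ :=
    fun n => norm_pos_iff.mpr (hEne n)
  have habs : ∀ n, ‖zs n - a n‖ ≤ 67/100 := by
    intro n
    obtain ⟨b, hb, hb2⟩ := eis_cover (zs n)
    exact (hnear n b hb).trans hb2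
  have habspos : ∀ n, 0 < ‖zs n - a n‖ := fun n =>
    norm_pos_iff.mpr (sub_ne_zero.mpr (hne n))
  have hzslb : ∀ n, (100:ℝ)/67 ≤ ‖zs (n+1)‖ := by
    intro n
    rw [hit n, norm_inv]
    have h := inv_anti₀ (habspos n) (habs n)
    calc (100:ℝ)/67 = (67/100 : ℝ)⁻¹ := by norm_num
    _ ≤ (‖zs n - a n‖)⁻¹ := h
  have habsE : ∀ n, ‖eisE a z n‖
      = ‖zs (n+1)‖ * ‖eisE a z (n+1)‖ := by
    intro n
    rw [hstep n, norm_mul, norm_neg]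
  have hdecay : ∀ n, ‖eisE a z (n+1)‖ ≤ (67/100) * ‖eisE a z n‖ := by
    intro n
    rw [habsE n]
    nlinarith [hzslb n, (hEpos (n+1)).le]
  have habs1 : ∀ n : ℕ, ‖(-1 : ℂ)^n‖ = 1 := by
    intro n; simp
  have hs_ub : ∀ n, ‖eisQ a (n+1) * eisE a z n‖ ≤ 2 := by
    intro n
    induction n with
    | zero =>
        rw [show eisQ a 1 = 1 from rfl, eisE_zero]
        simp
    | succ m ih =>
        have hdet := eis_detE a z (m+1)
        have h1 : eisQ a (m+2) * eisE a z (m+1)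
            = eisQ a (m+1) * eisE a z (m+2) - (-1:ℂ)^(m+1) := by
          linear_combination -hdet
        have h2 : ‖eisQ a (m+1) * eisE a z (m+2)‖
            ≤ (4489/10000) * ‖eisQ a (m+1) * eisE a z m‖ := by
          rw [norm_mul, norm_mul]
          have d1 := hdecay (m+1)
          have d0 := hdecay m
          nlinarith [norm_nonneg (eisQ a (m+1)), (hEpos (m+2)).le, (hEpos (m+1)).le]
        calc ‖eisQ a (m+2) * eisE a z (m+1)‖
            = ‖eisQ a (m+1) * eisE a z (m+2) + -((-1:ℂ)^(m+1))‖ := by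
              rw [h1, sub_eq_add_neg]
          _ ≤ ‖eisQ a (m+1) * eisE a z (m+2)‖ + ‖-((-1:ℂ)^(m+1))‖ :=
              norm_add_le _ _
          _ ≤ (4489/10000) * ‖eisQ a (m+1) * eisE a z m‖ + 1 := by
              rw [norm_neg, habs1]; linarith
          _ ≤ 2 := by nlinarith
  have hs_lb : ∀ n, (1:ℝ)/10 ≤ ‖eisQ a (n+1) * eisE a z n‖ := by
    intro n
    induction n with
    | zero =>
        rw [show eisQ a 1 = 1 from rfl, eisE_zero]
        simp
        norm_num
    | succ m _ =>
        have hdet := eis_detE a z (m+1)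
        have h2 : ‖eisQ a (m+1) * eisE a z (m+2)‖
            ≤ (4489/10000) * ‖eisQ a (m+1) * eisE a z m‖ := by
          rw [norm_mul, norm_mul]
          have d1 := hdecay (m+1)
          have d0 := hdecay m
          nlinarith [norm_nonneg (eisQ a (m+1)), (hEpos (m+2)).le, (hEpos (m+1)).le]
        have h3 : (1:ℝ) = ‖(-1:ℂ)^(m+1)‖ := (habs1 (m+1)).symm
        have h4 : ‖(-1:ℂ)^(m+1)‖
            ≤ ‖eisQ a (m+1) * eisE a z (m+2)‖
              + ‖eisQ a (m+2) * eisE a z (m+1)‖ := by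
          calc ‖(-1:ℂ)^(m+1)‖
              = ‖eisQ a (m+1) * eisE a z (m+2)
                  + -(eisQ a (m+2) * eisE a z (m+1))‖ := by
                rw [← sub_eq_add_neg, hdet]
            _ ≤ _ := by
                have := norm_add_le (eisQ a (m+1) * eisE a z (m+2))
                  (-(eisQ a (m+2) * eisE a z (m+1)))
                rwa [norm_neg] at this
        have h5 := hs_ub m
        nlinarith
  have hQne : ∀ n, eisQ a (n+1) ≠ 0 := by
    intro n h
    have h1 := hs_lb n
    rw [h, zero_mul, norm_zero] at h1
    linarith
  constructor
  · -- badly approximable → bounded quotients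
    rintro ⟨δ, hδ, hba⟩
    refine ⟨max (2/δ + 1) (‖a 0‖), fun n => ?_⟩
    cases n with
    | zero => exact le_max_right _ _
    | succ m =>
        have hQ := hQne m
        have hQpos : 0 < ‖eisQ a (m+1)‖ := norm_pos_iff.mpr hQ
        have happ := hba (eisP a (m+1)) (eisQ a (m+1)) (hPE _) (hQE _) hQ
        have hzq : z - eisP a (m+1) / eisQ a (m+1) = eisE a z (m+1) / eisQ a (m+1) := by
          rw [eisE]
          field_simp
        rw [hzq, norm_div] at happ
        rw [div_le_div_iff₀ (by positivity) hQpos] at happ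
        have h2 : δ ≤ ‖eisQ a (m+1)‖ * ‖eisE a z (m+1)‖ := by
          nlinarith [(hEpos (m+1)).le]
        have h3 : ‖eisQ a (m+1)‖ * ‖eisE a z m‖ ≤ 2 := by
          rw [← norm_mul]; exact hs_ub m
        have h4 := habsE m
        have h5 : δ * ‖zs (m+1)‖ ≤ 2 := by
          calc δ * ‖zs (m+1)‖
              ≤ (‖eisQ a (m+1)‖ * ‖eisE a z (m+1)‖)
                  * ‖zs (m+1)‖ := by
                nlinarith [hzslb m]
            _ = ‖eisQ a (m+1)‖ * ‖eisE a z m‖ := by rw [h4]; ring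
            _ ≤ 2 := h3
        have h6 : ‖zs (m+1)‖ ≤ 2/δ := by
          rw [le_div_iff₀ hδ]; linarith [mul_comm δ (‖zs (m+1)‖)]
        have h7 : ‖a (m+1)‖ ≤ ‖zs (m+1)‖ + 67/100 := by
          have ht := norm_add_le (a (m+1) - zs (m+1)) (zs (m+1))
          rw [sub_add_cancel] at ht
          have : ‖a (m+1) - zs (m+1)‖ = ‖zs (m+1) - a (m+1)‖ := by
            rw [← neg_sub, norm_neg]
          rw [this] at ht
          linarith [habs (m+1)]
        have h8 : ‖a (m+1)‖ ≤ 2/δ + 1 := by linarith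
        exact h8.trans (le_max_left _ _)
  · -- bounded quotients → badly approximable
    rintro ⟨A, hA⟩
    have hA0 : 0 ≤ A := le_trans (norm_nonneg _) (hA 0)
    set B : ℝ := A + 1 with hB
    have hB1 : (1:ℝ) ≤ B := by simp [hB]; linarith
    have hBpos : (0:ℝ) < B := by linarith
    have hzub : ∀ n, ‖zs (n+1)‖ ≤ B := by
      intro n
      have ht := norm_add_le (zs (n+1) - a (n+1)) (a (n+1))
      rw [sub_add_cancel] at ht
      have := habs (n+1)
      have := hA (n+1)
      simp only [hB]
      linarith
    have hkey : ∀ p q : ℂ, IsEis p → IsEis q → q ≠ 0 →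
        1/(10*B^2) ≤ ‖q * z - p‖ * ‖q‖ := by
      intro p q hp hq hq0
      have hq1 : 1 ≤ ‖q‖ := isEis_one_le_abs hq hq0
      have hqpos : (0:ℝ) < ‖q‖ := by linarith
      by_contra hcon
      push_neg at hcon
      set F : ℂ := q * z - p with hF
      -- find the right index
      have hEub : ∀ n, ‖eisE a z n‖ ≤ (67/100)^n := by
        intro n
        induction n with
        | zero => rw [eisE_zero]; simp
        | succ m ih =>
            calc ‖eisE a z (m+1)‖ ≤ (67/100) * ‖eisE a z m‖ := hdecay m
              _ ≤ (67/100) * (67/100)^m := by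
                  have := pow_nonneg (by norm_num : (0:ℝ) ≤ 67/100) m
                  nlinarith [(hEpos m).le]
              _ = (67/100)^(m+1) := by rw [pow_succ]; ring
      have hex : ∃ n, ‖eisE a z (n+1)‖ < 1/(3 * ‖q‖) := by
        obtain ⟨n, hn⟩ := exists_pow_lt_of_lt_one
          (show (0:ℝ) < 1/(3 * ‖q‖) by positivity)
          (by norm_num : (67:ℝ)/100 < 1)
        refine ⟨n, lt_of_le_of_lt ?_ hn⟩
        calc ‖eisE a z (n+1)‖ ≤ (67/100)^(n+1) := hEub (n+1)
          _ ≤ (67/100)^n := pow_le_pow_of_le_one (by norm_num) (by norm_num) (Nat.le_succ n)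
      obtain ⟨n, hn1, hn0⟩ : ∃ n, ‖eisE a z (n+1)‖ < 1/(3 * ‖q‖) ∧
          1/(3 * ‖q‖) ≤ ‖eisE a z n‖ := by
        refine ⟨Nat.find hex, Nat.find_spec hex, ?_⟩
        rcases Nat.eq_zero_or_pos (Nat.find hex) with h0 | hpos
        · rw [h0, eisE_zero]
          have h1 : ‖(-1 : ℂ)‖ = 1 := by simp
          rw [h1, div_le_one (by positivity)]
          linarith
        · have hlt : Nat.find hex - 1 < Nat.find hex := Nat.pred_lt hpos.ne'
          have h2 := Nat.find_min hex hlt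
          push_neg at h2
          rwa [Nat.sub_add_cancel hpos] at h2
      -- basic bounds at index n
      have hEn_le : ‖eisE a z n‖ ≤ B * ‖eisE a z (n+1)‖ := by
        rw [habsE n]
        exact mul_le_mul_of_nonneg_right (hzub n) (norm_nonneg _)
      have hE1lb : 1/(3 * B * ‖q‖) ≤ ‖eisE a z (n+1)‖ := by
        rw [div_le_iff₀ (by positivity)]
        rw [div_le_iff₀ (by positivity)] at hn0
        nlinarith [mul_le_mul_of_nonneg_right hEn_le
          (by positivity : (0:ℝ) ≤ 3 * ‖q‖)]
      have hE2ub : ‖eisE a z (n+2)‖ < (67/300) / ‖q‖ := by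
        have := hdecay (n+1)
        have h67 : (67:ℝ)/100 * (1/(3 * ‖q‖)) = (67/300)/‖q‖ := by
          field_simp; ring
        nlinarith
      have hQ2ub : ‖eisQ a (n+2)‖ ≤ 6 * B * ‖q‖ := by
        have h := hs_ub (n+1)
        rw [norm_mul] at h
        rw [div_le_iff₀ (by positivity)] at hE1lb
        nlinarith [norm_nonneg (eisQ a (n+2)), (hEpos (n+1)).le]
      -- the lattice coefficients
      set u : ℂ := eisQ a (n+2) * p - q * eisP a (n+2) with hu
      set v : ℂ := eisQ a (n+1) * p - q * eisP a (n+1) with hv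
      have hu_eis : IsEis u := isEis_sub (isEis_mul (hQE _) hp) (isEis_mul hq (hPE _))
      have hu_eq : u = q * eisE a z (n+2) - eisQ a (n+2) * F := by
        rw [hu, hF]; simp only [eisE]; ring
      have hv_eq : v = q * eisE a z (n+1) - eisQ a (n+1) * F := by
        rw [hv, hF]; simp only [eisE]; ring
      have huabs : ‖u‖ < 1 := by
        have t1 : ‖u‖ ≤ ‖q * eisE a z (n+2)‖
            + ‖eisQ a (n+2) * F‖ := by
          rw [hu_eq, sub_eq_add_neg]
          have := norm_add_le (q * eisE a z (n+2)) (-(eisQ a (n+2) * F))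
          rwa [norm_neg] at this
        rw [norm_mul, norm_mul] at t1
        have t2 : ‖q‖ * ‖eisE a z (n+2)‖ < 67/300 := by
          have := hE2ub
          rw [lt_div_iff₀ hqpos] at this
          nlinarith
        have hFnn : 0 ≤ ‖F‖ := norm_nonneg F
        have s1 : ‖eisQ a (n+2)‖ * ‖F‖
            ≤ (6 * B * ‖q‖) * ‖F‖ :=
          mul_le_mul_of_nonneg_right hQ2ub hFnn
        have hX : ‖F‖ * ‖q‖ * (10*B^2) < 1 := by
          rw [lt_div_iff₀ (by positivity)] at hcon
          exact hcon
        have t3 : ‖eisQ a (n+2)‖ * ‖F‖ < 6/10 := by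
          nlinarith [s1, hX, hB1, hFnn, hqpos.le,
            mul_nonneg (sub_nonneg.mpr hB1) (mul_nonneg hFnn hqpos.le)]
        linarith
      have hu0 : u = 0 := by
        by_contra h
        exact absurd (isEis_one_le_abs hu_eis h) (by linarith)
      -- determinant identities
      have hdet := eis_det a (n+1)
      have hdetE := eis_detE a z (n+1)
      have hidA : u * eisQ a (n+1) - v * eisQ a (n+2) = q * (-1:ℂ)^(n+1) := by
        rw [hu, hv]
        linear_combination q * hdet
      have hidB : u * eisE a z (n+1) - v * eisE a z (n+2) = F * (-1:ℂ)^(n+1) := by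
        rw [hu_eq, hv_eq]
        linear_combination F * hdetE
      rw [hu0, zero_mul, zero_sub] at hidA hidB
      have hvq : ‖v‖ * ‖eisQ a (n+2)‖ = ‖q‖ := by
        have := congrArg (‖·‖) hidA
        rwa [norm_neg, norm_mul, norm_mul, habs1, mul_one] at this
      have hv0 : v ≠ 0 := by
        intro h
        rw [h, norm_zero, zero_mul] at hvq
        linarith
      have hv1 : 1 ≤ ‖v‖ := isEis_one_le_abs
        (isEis_sub (isEis_mul (hQE _) hp) (isEis_mul hq (hPE _))) hv0
      have hFabs : ‖v‖ * ‖eisE a z (n+2)‖ = ‖F‖ := by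
        have := congrArg (‖·‖) hidB
        rwa [norm_neg, norm_mul, norm_mul, habs1, mul_one] at this
      -- final contradiction
      have hEn1_le : ‖eisE a z (n+1)‖ ≤ B * ‖eisE a z (n+2)‖ := by
        rw [habsE (n+1)]
        exact mul_le_mul_of_nonneg_right (hzub (n+1)) (norm_nonneg _)
      have hE2lb : 1/(3 * B^2 * ‖q‖) ≤ ‖eisE a z (n+2)‖ := by
        rw [div_le_iff₀ (by positivity)]
        rw [div_le_iff₀ (by positivity)] at hE1lb
        nlinarith [mul_le_mul_of_nonneg_right hEn1_le
          (by positivity : (0:ℝ) ≤ 3 * B * ‖q‖)]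
      have hFlb : 1/(3 * B^2 * ‖q‖) ≤ ‖F‖ := by
        calc 1/(3 * B^2 * ‖q‖) ≤ ‖eisE a z (n+2)‖ := hE2lb
          _ ≤ ‖v‖ * ‖eisE a z (n+2)‖ := by
              nlinarith [(hEpos (n+2)).le]
          _ = ‖F‖ := hFabs
      have hfinal : 1/(3 * B^2) ≤ ‖F‖ * ‖q‖ := by
        rw [div_le_iff₀ (by positivity)] at hFlb
        rw [div_le_iff₀ (by positivity)]
        nlinarith []
      have : 1/(10 * B^2) < 1/(3 * B^2) := by
        rw [div_lt_div_iff₀ (by positivity) (by positivity)]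
        nlinarith
      linarith
    refine ⟨1/(10*B^2), by positivity, ?_⟩
    intro p q hp hq hq0
    have hk := hkey p q hp hq hq0
    have hq1 : 1 ≤ ‖q‖ := isEis_one_le_abs hq hq0
    have hqpos : (0:ℝ) < ‖q‖ := by linarith
    have hzq : z - p / q = (q * z - p) / q := by field_simp
    rw [hzq, norm_div, div_le_div_iff₀ (by positivity) hqpos]
    nlinarith [mul_le_mul_of_nonneg_right hk hqpos.le]
end

section
/- Let z ∈ ℂ and let {a_n}, {z_n} be an infinite continued fraction expansion and iteration sequence of z over the Eisenstein integers 𝔈 with respect to a nearest integer algorithm, with Q-pair {p_n}, {q_n}. Let n ≥ 0, let α, β ∈ ℂ, and set p = α·p_n + β·p_{n−1} and q = α·q_n + β·q_{n−1}. If q ≠ 0, then |q·z − p| = |β·z_{n+1} − α| · |q_n·z − p_n|. -/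
open Complex

/-- For n ≥ 0 and α, β ∈ ℂ, if p = α·pₙ + β·p_{n−1} and q = α·qₙ + β·q_{n−1} with
q ≠ 0, then |q·z − p| = |β·z_{n+1} − α|·|qₙ·z − pₙ|.
(Here `p (n+1)`, `q (n+1)` denote pₙ, qₙ.) -/
theorem eisenstein_cf_error_factorization
    (z : ℂ) (a zs : ℕ → ℂ)
    (ha : ∀ n, IsEis (a n))
    (hz0 : zs 0 = z)
    (hnear : ∀ n, ∀ b : ℂ, IsEis b → ‖zs n - a n‖ ≤ ‖zs n - b‖)
    (hne : ∀ n, zs n ≠ a n)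
    (hit : ∀ n, zs (n + 1) = (zs n - a n)⁻¹)
    (p q : ℕ → ℂ)
    (hp0 : p 0 = 1) (hp1 : p 1 = a 0)
    (hprec : ∀ n, p (n + 2) = a (n + 1) * p (n + 1) + p n)
    (hq0 : q 0 = 0) (hq1 : q 1 = 1)
    (hqrec : ∀ n, q (n + 2) = a (n + 1) * q (n + 1) + q n)
    (hqne : ∀ n, q (n + 1) ≠ 0)
    :
    ∀ n : ℕ, ∀ α β : ℂ,
      α * q (n + 1) + β * q n ≠ 0 →
      ‖(α * q (n + 1) + β * q n) * z - (α * p (n + 1) + β * p n)‖ =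
        ‖β * zs (n + 1) - α‖ * ‖q (n + 1) * z - p (n + 1)‖ := by
  have hsub : ∀ n, zs n - a n ≠ 0 := fun n => sub_ne_zero.mpr (hne n)
  have key : ∀ n, zs (n + 1) * (q (n + 1) * z - p (n + 1)) = -(q n * z - p n) := by
    intro n
    induction n with
    | zero =>
      rw [hq0, hq1, hp0, hp1, hit 0, hz0]
      have h := hsub 0
      rw [hz0] at h
      field_simp
      ring
    | succ n ih =>
      rw [hqrec n, hprec n, hit (n + 1)]
      have h : q (n + 2) * z - p (n + 2) = (a (n + 1) - zs (n + 1)) * (q (n + 1) * z - p (n + 1)) := by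
        rw [hqrec n, hprec n]
        have : q n * z - p n = -(zs (n + 1) * (q (n + 1) * z - p (n + 1))) := by
          rw [ih]; ring
        ring_nf
        ring_nf at this
        linear_combination this
      rw [hqrec n, hprec n] at h
      rw [h]
      rw [inv_mul_eq_div, div_eq_iff (hsub (n + 1))]
      ring
  intro n α β _
  have h1 : (α * q (n + 1) + β * q n) * z - (α * p (n + 1) + β * p n)
      = -((β * zs (n + 1) - α) * (q (n + 1) * z - p (n + 1))) := by
    have := key n
    linear_combination β * this
  rw [h1, norm_neg, norm_mul]
end
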